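/- Let δ ≥ 0, let X be a geodesic metric space, let γ₀ : [0,∞) → X be a geodesic ray with Busemann function b, and let ε > 0. Let γ : ℝ → X be a geodesic line such that |b(γ(t)) − t| ≤ 144δ for all t ∈ ℝ. Then: (i) for every s ∈ ℝ, e^{−144δε}·ε⁻¹·e^{−εs} ≤ ∫_s^∞ e^{−ε·b(γ(t))} dt ≤ e^{144δε}·ε⁻¹·e^{−εs}; and (ii) if in addition ρ_ε is admissible with constant M ≥ 1, then d_ε(γ(s), γ(0)) → ∞ as s → −∞; in particular (X, d_ε) is unbounded. -/

import Mathlib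

open Filter MeasureTheory Set
open intervalIntegral

/-- `g` restricted to `s ⊆ ℝ` is an isometric (geodesic) parametrization. -/
def IsGeodesicOn {X : Type*} [MetricSpace X] (g : ℝ → X) (s : Set ℝ) : Prop :=
  ∀ u ∈ s, ∀ v ∈ s, dist (g u) (g v) = |u - v|

/-- A geodesic from `x` to `y`, parametrized by arclength on `[0, dist x y]`. -/
def GeodesicFromTo {X : Type*} [MetricSpace X] (g : ℝ → X) (x y : X) : Prop :=
  IsGeodesicOn g (Set.Icc 0 (dist x y)) ∧ g 0 = x ∧ g (dist x y) = y

/-- `X` is a geodesic metric space: every pair of points is joined by a geodesic. -/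
def GeodesicSpace (X : Type*) [MetricSpace X] : Prop :=
  ∀ x y : X, ∃ g : ℝ → X, GeodesicFromTo g x y

/-- The Gromov product `(x|y)_p` of `x` and `y` with basepoint `p`. -/
noncomputable def gromov {X : Type*} [MetricSpace X] (p x y : X) : ℝ :=
  (dist x p + dist y p - dist x y) / 2

/-- The conformal distance associated to a density `ρ`: the infimum of `ρ`-lengths of
1-Lipschitz curves `c : [0,L] → X` from `x` to `y`. -/
noncomputable def confDist {X : Type*} [MetricSpace X] (ρ : X → ℝ) (x y : X) : ℝ :=
  sInf {ℓ : ℝ | ∃ L : ℝ, 0 ≤ L ∧ ∃ c : ℝ → X, LipschitzOnWith 1 c (Set.Icc 0 L) ∧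
    c 0 = x ∧ c L = y ∧ ℓ = ∫ u in (0:ℝ)..L, ρ (c u)}

/-- The density `ρ` is admissible with constant `M`: every geodesic has `ρ`-length at
most `M` times the conformal distance between its endpoints. -/
def Admissible {X : Type*} [MetricSpace X] (ρ : X → ℝ) (M : ℝ) : Prop :=
  ∀ x y : X, ∀ g : ℝ → X, GeodesicFromTo g x y →
    (∫ u in (0:ℝ)..(dist x y), ρ (g u)) ≤ M * confDist ρ x y

/-- Theorem: along a geodesic line on which `b(γ(t)) ≐ t`, the tail `ρ_ε`-lengths are
comparable to `ε⁻¹e^{-εs}`; under admissibility the uniformized space is unbounded. -/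
theorem statement12 {X : Type*} [MetricSpace X] (δ : ℝ) (hδ : 0 ≤ δ)
    (hgeo : GeodesicSpace X)
    (γ₀ : ℝ → X) (hray : IsGeodesicOn γ₀ (Set.Ici 0))
    (b : X → ℝ)
    (hb : ∀ x : X, Tendsto (fun t : ℝ => dist (γ₀ t) x - t) atTop (nhds (b x)))
    (ε : ℝ) (hε : 0 < ε)
    (γ : ℝ → X) (hγ : IsGeodesicOn γ Set.univ)
    (hbγ : ∀ t : ℝ, |b (γ t) - t| ≤ 144 * δ) :
    (∀ s : ℝ,
      Real.exp (-(144 * δ * ε)) * ε⁻¹ * Real.exp (-(ε * s)) ≤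
          (∫ t in Set.Ioi s, Real.exp (-ε * b (γ t))) ∧
      (∫ t in Set.Ioi s, Real.exp (-ε * b (γ t))) ≤
          Real.exp (144 * δ * ε) * ε⁻¹ * Real.exp (-(ε * s))) ∧
    (∀ M : ℝ, 1 ≤ M → Admissible (fun z => Real.exp (-ε * b z)) M →
      Tendsto (fun s : ℝ => confDist (fun z => Real.exp (-ε * b z)) (γ s) (γ 0))
          atBot atTop ∧
      ∀ R : ℝ, ∃ p q : X, R < confDist (fun z => Real.exp (-ε * b z)) p q) := by
  -- b is 1-Lipschitz
  have hbsub : ∀ x y : X, b x - b y ≤ dist x y := by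
    intro x y
    refine le_of_tendsto ((hb x).sub (hb y)) ?_
    filter_upwards with t
    have h1 : dist (γ₀ t) x - dist (γ₀ t) y ≤ dist x y := by
      have := abs_dist_sub_le x y (γ₀ t)
      rw [abs_sub_le_iff] at this
      simpa [dist_comm] using this.1
    linarith
  have hblip : LipschitzWith 1 b := by
    refine LipschitzWith.of_dist_le_mul fun x y => ?_
    rw [Real.dist_eq, NNReal.coe_one, one_mul, abs_sub_le_iff]
    exact ⟨hbsub x y, by simpa [dist_comm] using hbsub y x⟩
  have hγlip : LipschitzWith 1 γ := by
    refine LipschitzWith.of_dist_le_mul fun u v => ?_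
    rw [hγ u trivial v trivial, NNReal.coe_one, one_mul, Real.dist_eq]
  have hfc : Continuous fun t : ℝ => Real.exp (-ε * b (γ t)) :=
    Real.continuous_exp.comp (continuous_const.mul (hblip.continuous.comp hγlip.continuous))
  -- pointwise bounds
  have hub : ∀ t : ℝ, Real.exp (-ε * b (γ t)) ≤ Real.exp (144 * δ * ε) * Real.exp (-ε * t) := by
    intro t
    rw [← Real.exp_add]
    apply Real.exp_le_exp.2
    have h := (abs_le.1 (hbγ t)).1
    nlinarith
  have hlb : ∀ t : ℝ, Real.exp (-(144 * δ * ε)) * Real.exp (-ε * t) ≤ Real.exp (-ε * b (γ t)) := by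
    intro t
    rw [← Real.exp_add]
    apply Real.exp_le_exp.2
    have h := (abs_le.1 (hbγ t)).2
    nlinarith
  -- the basic improper integral
  have hIoi : ∀ s : ℝ, (∫ t in Set.Ioi s, Real.exp (-ε * t)) = ε⁻¹ * Real.exp (-(ε * s)) := by
    intro s
    have h := integral_comp_mul_left_Ioi (fun x => Real.exp (-x)) s hε
    simp only [smul_eq_mul] at h
    calc (∫ t in Set.Ioi s, Real.exp (-ε * t))
        = ∫ t in Set.Ioi s, Real.exp (-(ε * t)) := by simp [neg_mul]
      _ = ε⁻¹ * ∫ t in Set.Ioi (ε * s), Real.exp (-t) := h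
      _ = ε⁻¹ * Real.exp (-(ε * s)) := by rw [integral_exp_neg_Ioi]
  have hIoiInt : ∀ s : ℝ, IntegrableOn (fun t => Real.exp (-ε * t)) (Set.Ioi s) :=
    fun s => exp_neg_integrableOn_Ioi s hε
  have hfint : ∀ s : ℝ, IntegrableOn (fun t => Real.exp (-ε * b (γ t))) (Set.Ioi s) := by
    intro s
    refine Integrable.mono' ((hIoiInt s).const_mul (Real.exp (144 * δ * ε)))
      hfc.aestronglyMeasurable ?_
    filter_upwards with t
    rw [Real.norm_eq_abs, abs_of_pos (Real.exp_pos _)]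
    exact hub t
  constructor
  · intro s
    constructor
    · calc Real.exp (-(144 * δ * ε)) * ε⁻¹ * Real.exp (-(ε * s))
          = Real.exp (-(144 * δ * ε)) * (ε⁻¹ * Real.exp (-(ε * s))) := by ring
        _ = Real.exp (-(144 * δ * ε)) * ∫ t in Set.Ioi s, Real.exp (-ε * t) := by rw [hIoi s]
        _ = ∫ t in Set.Ioi s, Real.exp (-(144 * δ * ε)) * Real.exp (-ε * t) := by
            rw [MeasureTheory.integral_const_mul]
        _ ≤ ∫ t in Set.Ioi s, Real.exp (-ε * b (γ t)) := by
            refine setIntegral_mono_on ((hIoiInt s).const_mul _) (hfint s)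
              measurableSet_Ioi fun t _ => hlb t
    · calc (∫ t in Set.Ioi s, Real.exp (-ε * b (γ t)))
          ≤ ∫ t in Set.Ioi s, Real.exp (144 * δ * ε) * Real.exp (-ε * t) := by
            refine setIntegral_mono_on (hfint s) ((hIoiInt s).const_mul _)
              measurableSet_Ioi fun t _ => hub t
        _ = Real.exp (144 * δ * ε) * ∫ t in Set.Ioi s, Real.exp (-ε * t) := by
            rw [MeasureTheory.integral_const_mul]
        _ = Real.exp (144 * δ * ε) * ε⁻¹ * Real.exp (-(ε * s)) := by rw [hIoi s]; ring
  · intro M hM hAdm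
    have hM0 : (0:ℝ) < M := lt_of_lt_of_le one_pos hM
    -- interval integral formula
    have hIcc : ∀ s : ℝ, (∫ t in s..(0:ℝ), Real.exp (-ε * t))
        = ε⁻¹ * (Real.exp (-(ε * s)) - 1) := by
      intro s
      have h := integral_comp_mul_left (a := s) (b := (0:ℝ))
        (fun x => Real.exp (-x)) hε.ne'
      simp only [smul_eq_mul, mul_zero] at h
      have h2 : (∫ x in (ε * s)..(0:ℝ), Real.exp (-x)) = -(1 - Real.exp (-(ε * s))) := by
        rw [integral_comp_neg (fun x => Real.exp x)]
        simp [integral_exp]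
      calc (∫ t in s..(0:ℝ), Real.exp (-ε * t))
          = ∫ t in s..(0:ℝ), Real.exp (-(ε * t)) := by simp [neg_mul]
        _ = ε⁻¹ * ∫ x in (ε * s)..(0:ℝ), Real.exp (-x) := h
        _ = ε⁻¹ * (Real.exp (-(ε * s)) - 1) := by rw [h2]; ring
    -- the key lower bound on confDist
    have key : ∀ s : ℝ, s ≤ 0 →
        Real.exp (-(144 * δ * ε)) * (ε⁻¹ * (Real.exp (-(ε * s)) - 1)) / M ≤
          confDist (fun z => Real.exp (-ε * b z)) (γ s) (γ 0) := by
      intro s hs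
      have hd : dist (γ s) (γ 0) = -s := by
        rw [hγ s trivial 0 trivial]
        simp [abs_of_nonpos hs]
      have hg : GeodesicFromTo (fun u => γ (s + u)) (γ s) (γ 0) := by
        refine ⟨fun u _ v _ => ?_, by simp, ?_⟩
        · rw [hγ (s + u) trivial (s + v) trivial]
          ring_nf
        · rw [hd]; norm_num
      have hAd := hAdm (γ s) (γ 0) _ hg
      rw [hd] at hAd
      have hcv : (∫ u in (0:ℝ)..(-s), Real.exp (-ε * b (γ (s + u))))
          = ∫ t in s..(0:ℝ), Real.exp (-ε * b (γ t)) := by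
        rw [integral_comp_add_left (fun t => Real.exp (-ε * b (γ t))) s]
        norm_num
      rw [hcv] at hAd
      have hmono : Real.exp (-(144 * δ * ε)) * (ε⁻¹ * (Real.exp (-(ε * s)) - 1)) ≤
          ∫ t in s..(0:ℝ), Real.exp (-ε * b (γ t)) := by
        have h1 : (∫ t in s..(0:ℝ), Real.exp (-(144 * δ * ε)) * Real.exp (-ε * t)) ≤
            ∫ t in s..(0:ℝ), Real.exp (-ε * b (γ t)) := by
          refine integral_mono_on hs ?_ ?_ fun t _ => hlb t
          · exact (Continuous.intervalIntegrable (by fun_prop) _ _)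
          · exact hfc.intervalIntegrable _ _
        calc Real.exp (-(144 * δ * ε)) * (ε⁻¹ * (Real.exp (-(ε * s)) - 1))
            = Real.exp (-(144 * δ * ε)) * ∫ t in s..(0:ℝ), Real.exp (-ε * t) := by
              rw [hIcc s]
          _ = ∫ t in s..(0:ℝ), Real.exp (-(144 * δ * ε)) * Real.exp (-ε * t) := by
              rw [intervalIntegral.integral_const_mul]
          _ ≤ _ := h1
      rw [div_le_iff₀ hM0]
      calc Real.exp (-(144 * δ * ε)) * (ε⁻¹ * (Real.exp (-(ε * s)) - 1))
          ≤ ∫ t in s..(0:ℝ), Real.exp (-ε * b (γ t)) := hmono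
        _ ≤ M * confDist (fun z => Real.exp (-ε * b z)) (γ s) (γ 0) := hAd
        _ = confDist (fun z => Real.exp (-ε * b z)) (γ s) (γ 0) * M := mul_comm _ _
    -- tendsto of the lower bound
    have hT : Tendsto (fun s : ℝ =>
        Real.exp (-(144 * δ * ε)) * (ε⁻¹ * (Real.exp (-(ε * s)) - 1)) / M) atBot atTop := by
      have h1 : Tendsto (fun s : ℝ => -(ε * s)) atBot atTop := by
        have := (tendsto_neg_atBot_atTop (G := ℝ)).const_mul_atTop hε
        simpa [mul_neg, neg_mul] using this
      have h2 : Tendsto (fun s : ℝ => Real.exp (-(ε * s))) atBot atTop :=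
        Real.tendsto_exp_atTop.comp h1
      have h3 : Tendsto (fun s : ℝ => Real.exp (-(ε * s)) - 1) atBot atTop := by
        simpa [sub_eq_add_neg] using tendsto_atTop_add_const_right atBot (-1:ℝ) h2
      have h4 : Tendsto (fun s : ℝ =>
          (Real.exp (-(144 * δ * ε)) * ε⁻¹) * (Real.exp (-(ε * s)) - 1)) atBot atTop :=
        h3.const_mul_atTop (by positivity)
      have h5 := h4.atTop_div_const hM0
      refine h5.congr fun s => ?_
      ring
    have hTend : Tendsto (fun s : ℝ => confDist (fun z => Real.exp (-ε * b z)) (γ s) (γ 0))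
        atBot atTop := by
      refine tendsto_atTop_mono' atBot ?_ hT
      filter_upwards [eventually_le_atBot (0:ℝ)] with s hs
      exact key s hs
    refine ⟨hTend, fun R => ?_⟩
    obtain ⟨s, hsR⟩ := (hTend.eventually (eventually_gt_atTop R)).exists
    exact ⟨γ s, γ 0, hsR⟩
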